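/- For every integer R ≥ 1, define I_R : ℝ → ℝ by I_R(δ) = ∫_0^1 ( (∫_0^s (u − δ)^R du) − s·(∫_0^1 (u − δ)^R du) )² / (s(1 − s)) ds. Then I_R attains its infimum over ℝ at δ = 1/2 (that is, I_R(δ) ≥ I_R(1/2) for every δ ∈ ℝ), and I_R(1/2) > 0. -/

import Mathlib

open MeasureTheory

noncomputable section

namespace StmtEleven

open Polynomial intervalIntegral


noncomputable def W (k : ℕ) : ℝ[X] := (X * (1 - X)) ^ k
noncomputable def G (k : ℕ) : ℝ[X] := if k = 0 then X else derivative^[k-1] (W k)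
noncomputable def ff (k : ℕ) : ℝ[X] := derivative (G k)

lemma G_succ (k : ℕ) (hk : 1 ≤ k) : G k = derivative^[k-1] (W k) := by
  simp [G, Nat.one_le_iff_ne_zero.mp hk]

lemma ff_eq (k : ℕ) (hk : 1 ≤ k) : ff k = derivative^[k] (W k) := by
  rw [ff, G_succ k hk, ← Function.iterate_succ_apply' derivative (k-1) (W k)]
  congr 1; omega

lemma eval_W (k : ℕ) (s : ℝ) : eval s (W k) = (s * (1 - s))^k := by
  simp [W]

lemma W_structure (k : ℕ) : ∀ i ≤ k, ∃ c : ℝ[X],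
    derivative^[i] (W k) = (X * (1 - X)) ^ (k - i) * c := by
  intro i hi
  induction i with
  | zero => exact ⟨1, by simp [W]⟩
  | succ i ih =>
    obtain ⟨c, hc⟩ := ih (by omega)
    refine ⟨C (k - i : ℝ) * (1 - 2*X) * c + X * (1 - X) * derivative c, ?_⟩
    rw [Function.iterate_succ_apply', hc]
    have hki : k - i = (k - (i+1)) + 1 := by omega
    rw [hki]
    rw [derivative_mul]
    rw [derivative_pow]
    have hd : derivative ((X : ℝ[X]) * (1 - X)) = 1 - 2*X := by
      simp [derivative_mul]; ring
    rw [hd]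
    have hcast : (C ((k - (i+1)) + 1 : ℕ) : ℝ[X]) = C ((k:ℝ) - i) := by
      congr 1
      push_cast [Nat.cast_sub hi]
      ring
    rw [hcast]
    rw [show ((k - (i+1)) + 1) - 1 = k - (i+1) from rfl]
    ring

lemma eval_iter_W_zero (k i : ℕ) (h : i < k) : eval 0 (derivative^[i] (W k)) = 0 := by
  obtain ⟨c, hc⟩ := W_structure k i h.le
  rw [hc]
  have : k - i ≠ 0 := by omega
  simp [this, zero_pow]

lemma eval_iter_W_one (k i : ℕ) (h : i < k) : eval 1 (derivative^[i] (W k)) = 0 := by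
  obtain ⟨c, hc⟩ := W_structure k i h.le
  rw [hc]
  have : k - i ≠ 0 := by omega
  simp [this, zero_pow]

lemma XmX_ne : (X * (1 - X) : ℝ[X]) ≠ 0 := by
  intro h
  have : natDegree (X * (1 - X) : ℝ[X]) = 2 := by compute_degree!
  simp [h] at this

lemma natDegree_XmX : natDegree (X * (1 - X) : ℝ[X]) = 2 := by compute_degree!

lemma W_ne (k : ℕ) : W k ≠ 0 := pow_ne_zero _ XmX_ne

lemma natDegree_W (k : ℕ) : (W k).natDegree = 2 * k := by
  rw [W, natDegree_pow, natDegree_XmX]; ring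

lemma deriv_ne_deg {p : ℝ[X]} (h : p.natDegree ≠ 0) :
    derivative p ≠ 0 ∧ (derivative p).natDegree = p.natDegree - 1 := by
  have hne : derivative p ≠ 0 := fun h' => h (natDegree_eq_zero_of_derivative_eq_zero h')
  refine ⟨hne, le_antisymm (natDegree_derivative_le p) ?_⟩
  apply le_natDegree_of_ne_zero
  rw [coeff_derivative]
  have h1 : p.natDegree - 1 + 1 = p.natDegree := by omega
  rw [h1]
  have : p.coeff p.natDegree ≠ 0 := by
    rw [← leadingCoeff]; exact leadingCoeff_ne_zero.mpr (fun h' => h (by simp [h']))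
  apply mul_ne_zero this
  have : ((p.natDegree - 1 : ℕ) : ℝ) + 1 > 0 := by positivity
  exact ne_of_gt this

lemma iter_deriv_facts (p : ℝ[X]) (hp : p ≠ 0) :
    ∀ i ≤ p.natDegree, derivative^[i] p ≠ 0 ∧ (derivative^[i] p).natDegree = p.natDegree - i := by
  intro i hi
  induction i with
  | zero => simpa using hp
  | succ i ih =>
    obtain ⟨h1, h2⟩ := ih (by omega)
    rw [Function.iterate_succ_apply']
    have hd : (derivative^[i] p).natDegree ≠ 0 := by omega
    obtain ⟨h3, h4⟩ := deriv_ne_deg hd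
    exact ⟨h3, by omega⟩

lemma ff_ne (k : ℕ) : ff k ≠ 0 := by
  rcases Nat.eq_zero_or_pos k with h | h
  · subst h; simp [ff, G]
  · rw [ff_eq k h]
    exact (iter_deriv_facts (W k) (W_ne k) k (by rw [natDegree_W]; omega)).1

lemma natDegree_ff (k : ℕ) : (ff k).natDegree = k := by
  rcases Nat.eq_zero_or_pos k with h | h
  · subst h; simp [ff, G]
  · rw [ff_eq k h]
    have := (iter_deriv_facts (W k) (W_ne k) k (by rw [natDegree_W]; omega)).2
    rw [this, natDegree_W]; omega

lemma G_ne (k : ℕ) : G k ≠ 0 := fun h => ff_ne k (by simp [ff, h])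

lemma eval_G_zero (k : ℕ) (hk : 1 ≤ k) : eval 0 (G k) = 0 := by
  rw [G_succ k hk]; exact eval_iter_W_zero k (k-1) (by omega)

lemma eval_G_one (k : ℕ) (hk : 1 ≤ k) : eval 1 (G k) = 0 := by
  rw [G_succ k hk]; exact eval_iter_W_one k (k-1) (by omega)

lemma natDegree_G_le (k : ℕ) (hk : 1 ≤ k) : (G k).natDegree ≤ k + 1 := by
  rw [G_succ k hk]
  have := natDegree_iterate_derivative (W k) (k-1)
  rw [natDegree_W] at this; omega

lemma exists_Q (k : ℕ) : ∃ q : ℝ[X],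
    1 ≤ k → (G k = X * (1 - X) * q ∧ q ≠ 0 ∧ q.natDegree ≤ k - 1) := by
  by_cases hk : 1 ≤ k
  · have h0 : X ∣ G k := by
      rw [X_dvd_iff]
      simpa [coeff_zero_eq_eval_zero] using eval_G_zero k hk
    obtain ⟨q1, hq1⟩ := h0
    have h1 : eval 1 q1 = 0 := by
      have := eval_G_one k hk
      rw [hq1] at this; simpa using this
    obtain ⟨q2, hq2⟩ := (dvd_iff_isRoot.mpr h1 : (X - C 1) ∣ q1)
    refine ⟨-q2, fun _ => ⟨?_, ?_, ?_⟩⟩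
    · rw [hq1, hq2, C_1]; ring
    · intro h
      apply G_ne k
      rw [hq1, hq2, neg_eq_zero.mp h]; ring
    · have hG : G k = X * (1 - X) * (-q2) := by rw [hq1, hq2, C_1]; ring
      by_cases hq : (-q2 : ℝ[X]) = 0
      · rw [hq]; simp
      · have := natDegree_G_le k hk
        rw [hG, natDegree_mul XmX_ne hq, natDegree_XmX] at this
        omega
  · exact ⟨0, fun h => absurd h hk⟩

noncomputable def Q (k : ℕ) : ℝ[X] := Classical.choose (exists_Q k)

lemma Q_spec (k : ℕ) (hk : 1 ≤ k) :
    G k = X * (1 - X) * Q k ∧ Q k ≠ 0 ∧ (Q k).natDegree ≤ k - 1 :=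
  Classical.choose_spec (exists_Q k) hk

lemma contEval (p : ℝ[X]) : Continuous (fun s : ℝ => eval s p) := p.continuous

lemma intInt (p : ℝ[X]) (a b : ℝ) : IntervalIntegrable (fun s => eval s p) volume a b :=
  (contEval p).intervalIntegrable a b

lemma intInt2 (p q : ℝ[X]) (a b : ℝ) :
    IntervalIntegrable (fun s => eval s p * eval s q) volume a b :=
  ((contEval p).mul (contEval q)).intervalIntegrable a b

lemma ibp (p q : ℝ[X]) :
    ∫ s in (0:ℝ)..1, eval s (derivative p) * eval s q
      = eval 1 p * eval 1 q - eval 0 p * eval 0 q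
        - ∫ s in (0:ℝ)..1, eval s p * eval s (derivative q) := by
  have h := intervalIntegral.integral_deriv_mul_eq_sub (a := (0:ℝ)) (b := 1)
    (u := fun x => eval x p) (v := fun x => eval x q)
    (u' := fun x => eval x (derivative p)) (v' := fun x => eval x (derivative q))
    (fun x _ => p.hasDerivAt x) (fun x _ => q.hasDerivAt x)
    (intInt _ _ _) (intInt _ _ _)
  rw [intervalIntegral.integral_add (intInt2 _ _ _ _) (intInt2 _ _ _ _)] at h
  linarith

lemma ibp_iter (k : ℕ) (Wp : ℝ[X])
    (h0 : ∀ i < k, eval 0 (derivative^[i] Wp) = 0)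
    (h1 : ∀ i < k, eval 1 (derivative^[i] Wp) = 0) :
    ∀ q : ℝ[X], ∫ s in (0:ℝ)..1, eval s (derivative^[k] Wp) * eval s q
      = (-1:ℝ)^k * ∫ s in (0:ℝ)..1, eval s Wp * eval s (derivative^[k] q) := by
  induction k with
  | zero => intro q; simp
  | succ k ih =>
    intro q
    rw [Function.iterate_succ_apply' derivative k Wp]
    rw [ibp (derivative^[k] Wp) q]
    rw [h0 k (by omega), h1 k (by omega)]
    rw [ih (fun i hi => h0 i (by omega)) (fun i hi => h1 i (by omega)) (derivative q)]
    rw [← Function.iterate_succ_apply derivative k q]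
    ring

noncomputable def m (k : ℕ) : ℝ := ∫ s in (0:ℝ)..1, (eval s (ff k))^2

noncomputable def nn (k : ℕ) : ℝ :=
  ∫ s in (0:ℝ)..1, eval s (X * (1 - X)) * (eval s (Q k))^2

lemma posint (a : ℕ) (p : ℝ[X]) (hp : p ≠ 0) :
    0 < ∫ s in (0:ℝ)..1, (eval s (X * (1 - X)))^a * (eval s p)^2 := by
  set q : ℝ[X] := (X * (1 - X))^a * p^2 with hq
  have hqne : q ≠ 0 := mul_ne_zero (pow_ne_zero _ XmX_ne) (pow_ne_zero _ hp)
  have heq : (fun s : ℝ => (eval s (X * (1 - X)))^a * (eval s p)^2)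
      = fun s => eval s q := by
    funext s; simp [hq]
  rw [heq]
  rw [intervalIntegral.integral_of_le (by norm_num : (0:ℝ) ≤ 1)]
  have hnonneg : 0 ≤ᵐ[volume.restrict (Set.Ioc (0:ℝ) 1)] fun s => eval s q := by
    filter_upwards [ae_restrict_mem measurableSet_Ioc] with s hs
    have h1 : 0 ≤ s * (1 - s) := by
      rcases hs with ⟨h2, h3⟩; nlinarith
    show (0:ℝ) ≤ eval s q
    have : eval s q = (s * (1 - s))^a * (eval s p)^2 := by simp [hq]
    rw [this]
    positivity
  have hint : IntegrableOn (fun s => eval s q) (Set.Ioc (0:ℝ) 1) volume :=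
    (contEval q).integrableOn_Ioc
  rw [MeasureTheory.setIntegral_pos_iff_support_of_nonneg_ae hnonneg hint]
  have hsub : Set.Ioc (0:ℝ) 1 \ {x | IsRoot q x}
      ⊆ (Function.support fun s => eval s q) ∩ Set.Ioc 0 1 := by
    intro x hx
    exact ⟨fun h => hx.2 h, hx.1⟩
  have hroots : volume {x : ℝ | IsRoot q x} = 0 :=
    (Polynomial.finite_setOf_isRoot hqne).measure_zero _
  have : volume (Set.Ioc (0:ℝ) 1 \ {x | IsRoot q x}) = volume (Set.Ioc (0:ℝ) 1) :=
    measure_diff_null hroots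
  calc (0:ENNReal) < volume (Set.Ioc (0:ℝ) 1) := by simp
    _ = volume (Set.Ioc (0:ℝ) 1 \ {x | IsRoot q x}) := this.symm
    _ ≤ _ := measure_mono hsub

lemma m_pos (k : ℕ) : 0 < m k := by
  have := posint 0 (ff k) (ff_ne k)
  simpa [m] using this

lemma nn_nonneg (k : ℕ) : 0 ≤ nn k := by
  rw [nn]
  apply intervalIntegral.integral_nonneg (by norm_num : (0:ℝ) ≤ 1)
  intro s hs
  have h1 : 0 ≤ s * (1 - s) := by
    rcases hs with ⟨h2, h3⟩; nlinarith
  have : eval s (X * (1 - X)) = s * (1 - s) := by simp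
  rw [this]; positivity

lemma nn_pos (k : ℕ) (hk : 1 ≤ k) : 0 < nn k := by
  have := posint 1 (Q k) (Q_spec k hk).2.1
  simpa [nn] using this

/-- orthogonality of the `ff` family w.r.t. Lebesgue weight -/
lemma orth_ff {j k : ℕ} (hjk : j < k) :
    ∫ s in (0:ℝ)..1, eval s (ff j) * eval s (ff k) = 0 := by
  have hk : 1 ≤ k := by omega
  have h := ibp_iter k (W k) (fun i hi => eval_iter_W_zero k i hi)
    (fun i hi => eval_iter_W_one k i hi) (ff j)
  rw [← ff_eq k hk] at h
  have hz : derivative^[k] (ff j) = 0 :=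
    iterate_derivative_eq_zero (by rw [natDegree_ff]; omega)
  rw [hz] at h
  simp only [eval_zero, mul_zero, intervalIntegral.integral_zero, mul_zero] at h
  rw [← h]
  congr 1; funext s; ring

lemma orth_ff' {j k : ℕ} (hjk : j ≠ k) :
    ∫ s in (0:ℝ)..1, eval s (ff j) * eval s (ff k) = 0 := by
  rcases lt_or_gt_of_ne hjk with h | h
  · exact orth_ff h
  · have := orth_ff h
    rw [← this]
    congr 1; funext s; ring

/-- orthogonality: `∫ Q j * G k = 0` for `1 ≤ j, k`, `j ≠ k`. -/
lemma orth_QG {j k : ℕ} (hj : 1 ≤ j) (hjk : j < k) :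
    ∫ s in (0:ℝ)..1, eval s (Q j) * eval s (G k) = 0 := by
  have hk1 : 1 ≤ k := by omega
  have h := ibp_iter (k-1) (W k) (fun i hi => eval_iter_W_zero k i (by omega))
    (fun i hi => eval_iter_W_one k i (by omega)) (Q j)
  rw [← G_succ k hk1] at h
  have hz : derivative^[k-1] (Q j) = 0 := by
    apply iterate_derivative_eq_zero
    have := (Q_spec j hj).2.2
    omega
  rw [hz] at h
  simp only [eval_zero, mul_zero, intervalIntegral.integral_zero, mul_zero] at h
  rw [← h]
  congr 1; funext s; ring

lemma expand : ∀ n : ℕ, ∀ p : ℝ[X], p.natDegree ≤ n →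
    ∃ b : ℕ → ℝ, p = ∑ k ∈ Finset.range (n+1), C (b k) * ff k := by
  intro n
  induction n with
  | zero =>
    intro p hp
    refine ⟨fun _ => p.coeff 0, ?_⟩
    have h0 : ff 0 = 1 := by simp [ff, G]
    rw [Finset.sum_range_one, h0, mul_one]
    exact (Polynomial.eq_C_of_natDegree_le_zero hp)
  | succ n ih =>
    intro p hp
    set c : ℝ := p.coeff (n+1) / (ff (n+1)).coeff (n+1) with hc
    have hlead : (ff (n+1)).coeff (n+1) ≠ 0 := by
      have h2 : (ff (n+1)).leadingCoeff ≠ 0 := leadingCoeff_ne_zero.mpr (ff_ne (n+1))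
      simpa [Polynomial.leadingCoeff, natDegree_ff] using h2
    have hdeg : (p - C c * ff (n+1)).natDegree ≤ n := by
      rw [natDegree_le_iff_coeff_eq_zero]
      intro N hN
      rcases Nat.lt_or_ge N (n+2) with h | h
      · have hN1 : N = n+1 := by omega
        subst hN1
        simp only [coeff_sub, coeff_C_mul]
        rw [hc, div_mul_cancel₀ _ hlead]
        ring
      · simp only [coeff_sub, coeff_C_mul]
        rw [coeff_eq_zero_of_natDegree_lt (by omega : p.natDegree < N),
          coeff_eq_zero_of_natDegree_lt (by rw [natDegree_ff]; omega)]
        ring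
    obtain ⟨b, hb⟩ := ih (p - C c * ff (n+1)) hdeg
    refine ⟨fun k => if k = n+1 then c else b k, ?_⟩
    rw [Finset.sum_range_succ]
    have hsum : ∑ k ∈ Finset.range (n+1), C (if k = n+1 then c else b k) * ff k
        = ∑ k ∈ Finset.range (n+1), C (b k) * ff k := by
      apply Finset.sum_congr rfl
      intro k hk
      rw [if_neg (by simp at hk; omega)]
    rw [hsum, show (fun k => if k = n + 1 then c else b k) (n+1) = c from by simp, ← hb]
    ring

noncomputable def ψ (R k : ℕ) (δ : ℝ) : ℝ :=
  ∫ s in (0:ℝ)..1, (s - δ)^(R - k) * eval s (W k)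

noncomputable def μ (k i : ℕ) : ℝ :=
  ∫ s in (0:ℝ)..1, (s - 1/2)^i * eval s (W k)

lemma mu_odd (k i : ℕ) (hi : Odd i) : μ k i = 0 := by
  have hsym : (∫ s in (0:ℝ)..1, (fun x => (x - 1/2)^i * eval x (W k)) (1 - s))
      = ∫ s in (0:ℝ)..1, (s - 1/2)^i * eval s (W k) := by
    rw [intervalIntegral.integral_comp_sub_left (fun x => (x - 1/2)^i * eval x (W k)) 1]
    norm_num
  have hneg : ∀ s : ℝ, (fun x => (x - 1/2)^i * eval x (W k)) (1 - s)
      = -((s - 1/2)^i * eval s (W k)) := by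
    intro s
    simp only [eval_W]
    have h1 : (1 - s - 1/2 : ℝ) = -(s - 1/2) := by ring
    rw [h1, hi.neg_pow]
    ring_nf
  have : μ k i = -μ k i := by
    conv_lhs => rw [μ, ← hsym]
    simp_rw [hneg]
    rw [intervalIntegral.integral_neg]
    rfl
  linarith

lemma mu_even_nonneg (k i : ℕ) (hi : Even i) : 0 ≤ μ k i := by
  rw [μ]
  apply intervalIntegral.integral_nonneg (by norm_num : (0:ℝ) ≤ 1)
  intro s hs
  have h1 : 0 ≤ s * (1 - s) := by rcases hs with ⟨h2, h3⟩; nlinarith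
  rw [eval_W]
  have h2 : 0 ≤ (s - 1/2)^i := hi.pow_nonneg _
  positivity

lemma psi_expand (R k : ℕ) (δ : ℝ) : ψ R k δ
    = ∑ i ∈ Finset.range (R - k + 1),
        ((R-k).choose i : ℝ) * (1/2 - δ)^(R-k-i) * μ k i := by
  set mm := R - k with hmm
  have hpt : ∀ s : ℝ, (s - δ)^mm * eval s (W k)
      = ∑ i ∈ Finset.range (mm + 1),
          ((mm.choose i : ℝ) * (1/2 - δ)^(mm-i)) * ((s - 1/2)^i * eval s (W k)) := by
    intro s
    have h1 : (s - δ) = (s - 1/2) + (1/2 - δ) := by ring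
    rw [h1, add_pow, Finset.sum_mul]
    apply Finset.sum_congr rfl
    intro i hi
    ring
  rw [ψ, ← hmm]
  simp_rw [hpt]
  rw [intervalIntegral.integral_finset_sum]
  · apply Finset.sum_congr rfl
    intro i hi
    rw [intervalIntegral.integral_const_mul]
    unfold μ
    ring
  · intro i hi
    apply Continuous.intervalIntegrable
    apply Continuous.mul continuous_const
    exact (continuous_pow i |>.comp (by continuity)).mul (contEval (W k))

lemma psi_half (R k : ℕ) : ψ R k (1/2) = μ k (R - k) := rfl

lemma psi_sq_le (R k : ℕ) (δ : ℝ) : (ψ R k (1/2))^2 ≤ (ψ R k δ)^2 := by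
  rcases Nat.even_or_odd (R - k) with he | ho
  · have h0 : 0 ≤ μ k (R-k) := mu_even_nonneg k (R-k) he
    have hle : μ k (R-k) ≤ ψ R k δ := by
      rw [psi_expand R k δ]
      have hmem : (R-k) ∈ Finset.range ((R-k) + 1) := Finset.self_mem_range_succ (R-k)
      have hval : (((R-k).choose (R-k) : ℝ)) * (1/2 - δ)^((R-k)-(R-k)) * μ k (R-k)
          = μ k (R-k) := by simp
      rw [← hval]
      apply Finset.single_le_sum
        (f := fun i => (((R-k).choose i : ℝ)) * (1/2 - δ)^((R-k)-i) * μ k i) _ hmem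
      intro i hi
      rcases Nat.even_or_odd i with hie | hio
      · have h1 : Even ((R-k) - i) := by
          rcases he with ⟨a, ha⟩; rcases hie with ⟨b, hb⟩
          simp at hi
          exact ⟨a - b, by omega⟩
        have h2 : (0:ℝ) ≤ (1/2 - δ)^((R-k)-i) := h1.pow_nonneg _
        have h3 : 0 ≤ μ k i := mu_even_nonneg k i hie
        positivity
      · show (0:ℝ) ≤ ((R-k).choose i : ℝ) * (1/2 - δ)^(R-k-i) * μ k i
        rw [mu_odd k i hio, mul_zero]
    rw [psi_half]
    exact pow_le_pow_left₀ h0 hle 2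
  · rw [psi_half, mu_odd k (R-k) ho]
    simpa using sq_nonneg (ψ R k δ)

lemma range_succ_sum {M : Type*} [AddCommMonoid M] (R : ℕ) (g : ℕ → M) :
    ∑ k ∈ Finset.range (R+1), g k = g 0 + ∑ k ∈ Finset.Icc 1 R, g k := by
  have h : Finset.range (R+1) = insert 0 (Finset.Icc 1 R) := by
    ext x; simp [Finset.mem_range, Finset.mem_Icc, Finset.mem_insert]; omega
  rw [h, Finset.sum_insert (by simp)]

lemma key (R : ℕ) (hR : 1 ≤ R) (δ : ℝ) :
    (∫ s in (0:ℝ)..1,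
      ((∫ u in (0:ℝ)..s, (u - δ) ^ R) - s * ∫ u in (0:ℝ)..1, (u - δ) ^ R) ^ 2
        / (s * (1 - s)))
    = ∑ k ∈ Finset.Icc 1 R,
        ((R.descFactorial k : ℝ) * ψ R k δ / m k)^2 * nn k := by
  set p : ℝ[X] := (X - C δ)^R with hp
  have hdeg : p.natDegree = R := by
    rw [hp, natDegree_pow, natDegree_X_sub_C, mul_one]
  obtain ⟨b, hb⟩ := expand R p hdeg.le
  have hval : ∀ u : ℝ, (u - δ)^R = eval u p := by intro u; simp [hp]
  set P : ℝ[X] := ∑ k ∈ Finset.range (R+1), C (b k) * G k with hPdef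
  have hP : derivative P = p := by
    rw [hPdef, map_sum]
    rw [hb]
    apply Finset.sum_congr rfl
    intro k _
    rw [derivative_C_mul]
    rfl
  have hFTC : ∀ s : ℝ, (∫ u in (0:ℝ)..s, (u - δ)^R) = eval s P - eval 0 P := by
    intro s
    simp_rw [hval]
    apply intervalIntegral.integral_eq_sub_of_hasDerivAt
    · intro x _
      have := P.hasDerivAt x
      rwa [hP] at this
    · exact intInt p 0 s
  have hP0 : eval 0 P = 0 := by
    rw [hPdef, eval_finset_sum]
    apply Finset.sum_eq_zero
    intro k hk
    rcases Nat.eq_zero_or_pos k with h | h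
    · subst h; simp [G]
    · simp [eval_G_zero k h]
  have hP1 : eval 1 P = b 0 := by
    rw [hPdef, eval_finset_sum]
    rw [range_succ_sum R (fun k => eval 1 (C (b k) * G k))]
    have h0 : eval 1 (C (b 0) * G 0) = b 0 := by simp [G]
    rw [h0]
    have : ∑ k ∈ Finset.Icc 1 R, eval 1 (C (b k) * G k) = 0 := by
      apply Finset.sum_eq_zero
      intro k hk
      simp at hk
      simp [eval_G_one k hk.1]
    rw [this, add_zero]
  set Sq : ℝ[X] := ∑ k ∈ Finset.Icc 1 R, C (b k) * Q k with hSq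
  have hE : ∀ s : ℝ, (∫ u in (0:ℝ)..s, (u - δ)^R) - s * (∫ u in (0:ℝ)..1, (u - δ)^R)
      = eval s (X * (1 - X)) * eval s Sq := by
    intro s
    rw [hFTC s, hFTC 1, hP0, hP1]
    have hPs : eval s P = b 0 * s + ∑ k ∈ Finset.Icc 1 R, b k * eval s (G k) := by
      rw [hPdef, eval_finset_sum, range_succ_sum R (fun k => eval s (C (b k) * G k))]
      simp only [eval_mul, eval_C]
      congr 1
      simp [G]
    rw [hPs]
    have hGk : ∀ k ∈ Finset.Icc 1 R, b k * eval s (G k)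
        = b k * (eval s (X * (1 - X)) * eval s (Q k)) := by
      intro k hk
      simp at hk
      rw [(Q_spec k hk.1).1]
      simp [eval_mul]
    rw [Finset.sum_congr rfl hGk, hSq, eval_finset_sum]
    rw [Finset.mul_sum]
    simp only [eval_mul, eval_C]
    ring_nf
    congr 1
    funext k
    ring
  -- rewrite the integral
  have hcongr : ∀ s ∈ Set.uIcc (0:ℝ) 1,
      ((∫ u in (0:ℝ)..s, (u - δ)^R) - s * (∫ u in (0:ℝ)..1, (u - δ)^R))^2 / (s * (1 - s))
      = eval s (X * (1 - X)) * (eval s Sq)^2 := by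
    intro s _
    rw [hE s]
    have hw : eval s (X * (1 - X)) = s * (1 - s) := by simp
    rw [hw]
    rcases eq_or_ne (s * (1 - s)) 0 with h | h
    · rw [h]; simp
    · field_simp
  rw [intervalIntegral.integral_congr hcongr]
  -- Step A: expand the square and use orthogonality
  have horth : ∀ j ∈ Finset.Icc 1 R, ∀ k ∈ Finset.Icc 1 R, k ≠ j →
      (∫ s in (0:ℝ)..1, eval s (X * (1 - X)) * (eval s (Q j) * eval s (Q k))) = 0 := by
    intro j hj k hk hjk
    simp only [Finset.mem_Icc] at hj hk
    rcases lt_or_gt_of_ne hjk with h | h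
    · have h0 := orth_QG hk.1 h
      refine Eq.trans ?_ h0
      apply intervalIntegral.integral_congr
      intro s _
      rw [(Q_spec j (by omega)).1]
      simp only [eval_mul]; ring
    · have h0 := orth_QG hj.1 h
      refine Eq.trans ?_ h0
      apply intervalIntegral.integral_congr
      intro s _
      rw [(Q_spec k (by omega)).1]
      simp only [eval_mul]; ring
  have hsum1 : (∫ s in (0:ℝ)..1, eval s (X * (1 - X)) * (eval s Sq)^2)
      = ∑ j ∈ Finset.Icc 1 R, (b j)^2 * nn j := by
    have hptw : ∀ s : ℝ, eval s (X * (1 - X)) * (eval s Sq)^2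
        = ∑ j ∈ Finset.Icc 1 R, ∑ k ∈ Finset.Icc 1 R,
            (b j * b k) * (eval s (X * (1 - X)) * (eval s (Q j) * eval s (Q k))) := by
      intro s
      rw [hSq, eval_finset_sum, sq, Finset.sum_mul_sum, Finset.mul_sum]
      apply Finset.sum_congr rfl; intro j _
      rw [Finset.mul_sum]
      apply Finset.sum_congr rfl; intro k _
      simp only [eval_mul, eval_C]
      ring
    simp_rw [hptw]
    rw [intervalIntegral.integral_finset_sum (fun j _ => ?_)]
    swap
    · apply Continuous.intervalIntegrable
      apply continuous_finset_sum
      intro k _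
      exact continuous_const.mul ((contEval _).mul ((contEval _).mul (contEval _)))
    apply Finset.sum_congr rfl
    intro j hj
    rw [intervalIntegral.integral_finset_sum
      (f := fun k s => b j * b k * (eval s (X * (1 - X)) * (eval s (Q j) * eval s (Q k))))
      (fun k _ => (continuous_const.mul
      ((contEval _).mul ((contEval _).mul (contEval _)))).intervalIntegrable _ _)]
    rw [Finset.sum_eq_single_of_mem j hj (fun k hk hkj => ?_)]
    swap
    · rw [intervalIntegral.integral_const_mul, horth j hj k hk hkj, mul_zero]
    rw [intervalIntegral.integral_const_mul]
    have : (∫ s in (0:ℝ)..1, eval s (X * (1 - X)) * (eval s (Q j) * eval s (Q j)))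
        = nn j := by
      rw [nn]
      apply intervalIntegral.integral_congr
      intro s _; ring
    rw [this]
    ring
  rw [hsum1]
  -- Step B: identify the coefficients
  apply Finset.sum_congr rfl
  intro k hk
  simp only [Finset.mem_Icc] at hk
  have hbk : b k * m k = (-1:ℝ)^k * (R.descFactorial k : ℝ) * ψ R k δ := by
    have h1 : (∫ s in (0:ℝ)..1, eval s p * eval s (ff k)) = b k * m k := by
      conv_lhs => rw [hb]
      have hpt2 : ∀ s : ℝ, eval s (∑ j ∈ Finset.range (R+1), C (b j) * ff j) * eval s (ff k)
          = ∑ j ∈ Finset.range (R+1), b j * (eval s (ff j) * eval s (ff k)) := by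
        intro s
        rw [eval_finset_sum, Finset.sum_mul]
        apply Finset.sum_congr rfl
        intro j _
        simp only [eval_mul, eval_C]; ring
      simp_rw [hpt2]
      rw [intervalIntegral.integral_finset_sum (f := fun j s => b j * (eval s (ff j) * eval s (ff k)))
        (fun j _ => (continuous_const.mul
        ((contEval _).mul (contEval _))).intervalIntegrable _ _)]
      rw [Finset.sum_eq_single_of_mem k (by simp [Finset.mem_range]; omega)
        (fun j hj hjk => ?_)]
      swap
      · rw [intervalIntegral.integral_const_mul, orth_ff' hjk, mul_zero]
      rw [intervalIntegral.integral_const_mul]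
      have : (∫ s in (0:ℝ)..1, eval s (ff k) * eval s (ff k)) = m k := by
        rw [m]
        apply intervalIntegral.integral_congr
        intro s _; ring
      rw [this]
    have h2 : (∫ s in (0:ℝ)..1, eval s p * eval s (ff k))
        = (-1:ℝ)^k * (R.descFactorial k : ℝ) * ψ R k δ := by
      have hibp := ibp_iter k (W k) (fun i hi => eval_iter_W_zero k i hi)
        (fun i hi => eval_iter_W_one k i hi) p
      rw [← ff_eq k hk.1] at hibp
      have hDp : derivative^[k] p = (R.descFactorial k) • (X - C δ)^(R - k) := by
        rw [hp]; exact iterate_derivative_X_sub_pow R k δ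
      have hflip : (∫ s in (0:ℝ)..1, eval s p * eval s (ff k))
          = ∫ s in (0:ℝ)..1, eval s (ff k) * eval s p := by
        apply intervalIntegral.integral_congr; intro s _; ring
      rw [hflip, hibp, hDp]
      have : ∀ s : ℝ, eval s (W k) * eval s ((R.descFactorial k) • (X - C δ)^(R - k))
          = (R.descFactorial k : ℝ) * ((s - δ)^(R-k) * eval s (W k)) := by
        intro s
        rw [eval_smul]
        simp only [smul_eq_mul, eval_pow, eval_sub, eval_X, eval_C]
        ring
      simp_rw [this]
      rw [intervalIntegral.integral_const_mul, ψ]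
      ring
    rw [← h1, h2]
  have hm := m_pos k
  have hbk2 : b k = (-1:ℝ)^k * ((R.descFactorial k : ℝ) * ψ R k δ / m k) := by
    field_simp at hbk ⊢
    linarith [hbk]
  have hsq : (b k)^2 = ((R.descFactorial k : ℝ) * ψ R k δ / m k)^2 := by
    rw [hbk2, mul_pow]
    have h4 : ((-1:ℝ)^k)^2 = 1 := by
      rw [← pow_mul, mul_comm, pow_mul]
      norm_num
    rw [h4, one_mul]
  rw [hsq]

lemma psi_top_pos (R : ℕ) : 0 < ψ R R (1/2) := by
  have h0 := posint R 1 one_ne_zero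
  have h1 : ψ R R (1/2) = ∫ s in (0:ℝ)..1, (eval s (X*(1-X)))^R * (eval s (1:ℝ[X]))^2 := by
    rw [ψ]
    apply intervalIntegral.integral_congr
    intro s _
    simp [eval_W]
  rw [h1]; exact h0

end StmtEleven

open StmtEleven

/-- For every integer `R ≥ 1`, the function
`I_R(δ) = ∫₀¹ ((∫₀ˢ (u−δ)^R du) − s·∫₀¹ (u−δ)^R du)² / (s(1−s)) ds`
attains its infimum over `ℝ` at `δ = 1/2`, and `I_R(1/2) > 0`. -/
theorem integrated_impurity_minimized_at_half (R : ℕ) (hR : 1 ≤ R)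
    (I : ℝ → ℝ)
    (hI : ∀ δ, I δ = ∫ s in (0:ℝ)..1,
      ((∫ u in (0:ℝ)..s, (u - δ) ^ R) - s * ∫ u in (0:ℝ)..1, (u - δ) ^ R) ^ 2
        / (s * (1 - s))) :
    (∀ δ, I (1 / 2) ≤ I δ) ∧ 0 < I (1 / 2) := by
  constructor
  · intro δ
    rw [hI δ, hI (1/2), key R hR δ, key R hR (1/2)]
    apply Finset.sum_le_sum
    intro k hk
    simp only [Finset.mem_Icc] at hk
    have h1 := psi_sq_le R k δ
    have h2 := nn_nonneg k
    have hm := m_pos k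
    have e : ∀ x : ℝ, ((R.descFactorial k : ℝ) * x / m k)^2
        = ((R.descFactorial k : ℝ)^2 / (m k)^2) * x^2 := fun x => by ring
    rw [e, e]
    have h3 : 0 ≤ (R.descFactorial k : ℝ)^2 / (m k)^2 := by positivity
    exact mul_le_mul_of_nonneg_right (mul_le_mul_of_nonneg_left h1 h3) h2
  · rw [hI (1/2), key R hR (1/2)]
    apply Finset.sum_pos'
    · intro k _
      exact mul_nonneg (sq_nonneg _) (nn_nonneg k)
    · refine ⟨R, by simp [Finset.mem_Icc]; omega, ?_⟩
      apply mul_pos _ (nn_pos R hR)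
      apply pow_pos
      apply div_pos _ (m_pos R)
      apply mul_pos _ (psi_top_pos R)
      have : 0 < R.descFactorial R := by
        rw [Nat.descFactorial_self]
        exact Nat.factorial_pos R
      exact_mod_cast this
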